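/- Let N be a positive integer, t_min < t_max, M = (N+1)/2 if N is odd or (N+2)/2 if N is even. Consider the evaluation map F from the set Nam_N of namings (c_1,...,c_M,t_1,...,t_M) (with c_j ≥ 0, Σc_j = 1, t_min ≤ t_1 ≤ ... ≤ t_M ≤ t_max, and t_1 = t_min if N even) to ℝ^N given by F = Σ c_j C_N(t_j). Then the image of F equals the convex hull of the curve C_N([t_min, t_max]). -/

import Mathlib

open Polynomial Finset Filter

lemma exists_orth (T : Finset ℝ) (w : ℝ → ℝ) (hw : ∀ s ∈ T, 0 < w s) (m : ℕ)
    (hcard : m + 1 ≤ T.card) :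
    ∃ p : ℝ[X], p.Monic ∧ p.natDegree = m ∧
      ∀ q : ℝ[X], q.natDegree < m → ∑ s ∈ T, w s * (p.eval s * q.eval s) = 0 := by
  -- linear map: coefficients ↦ inner products with monomials of degree < m
  set φ : (Fin (m+1) → ℝ) →ₗ[ℝ] (Fin m → ℝ) :=
    { toFun := fun c => fun i => ∑ s ∈ T, w s * ((∑ j, c j * s ^ (j:ℕ)) * s ^ (i:ℕ))
      map_add' := by
        intro c d
        have hh : ∀ s : ℝ, (∑ j : Fin (m+1), (c + d) j * s ^ (j:ℕ))
            = (∑ j : Fin (m+1), c j * s ^ (j:ℕ)) + ∑ j : Fin (m+1), d j * s ^ (j:ℕ) := by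
          intro s
          rw [← Finset.sum_add_distrib]
          exact Finset.sum_congr rfl fun j _ => by simp [add_mul]
        funext i
        simp only [hh, Pi.add_apply, add_mul, mul_add, Finset.sum_add_distrib]
      map_smul' := by
        intro r c
        have hh : ∀ s : ℝ, (∑ j : Fin (m+1), (r • c) j * s ^ (j:ℕ))
            = r * ∑ j : Fin (m+1), c j * s ^ (j:ℕ) := by
          intro s
          rw [Finset.mul_sum]
          exact Finset.sum_congr rfl fun j _ => by simp [mul_assoc]
        funext i
        simp only [RingHom.id_apply, Pi.smul_apply, smul_eq_mul, Finset.mul_sum]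
        refine Finset.sum_congr rfl fun s _ => ?_
        have inner : (∑ x : Fin (m+1), r * c x * s ^ (x:ℕ))
            = r * ∑ x : Fin (m+1), c x * s ^ (x:ℕ) := by
          rw [Finset.mul_sum]; exact Finset.sum_congr rfl fun x _ => by ring
        rw [inner]; ring } with hφ
  have hker : LinearMap.ker φ ≠ ⊥ := by
    intro hk
    have hinj : Function.Injective φ := LinearMap.ker_eq_bot.mp hk
    have := LinearMap.finrank_le_finrank_of_injective hinj
    simp [Module.finrank_fintype_fun_eq_card] at this
  obtain ⟨c, hc, hc0⟩ := (Submodule.ne_bot_iff _).mp hker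
  set p₀ : ℝ[X] := ∑ j : Fin (m+1), C (c j) * X ^ (j:ℕ) with hp₀
  have hcoeff : ∀ j : Fin (m+1), p₀.coeff (j:ℕ) = c j := by
    intro j
    rw [hp₀, finset_sum_coeff]
    rw [Finset.sum_eq_single j]
    · simp
    · intro k _ hkj
      rw [coeff_C_mul, coeff_X_pow, if_neg (fun hh => hkj (Fin.ext hh.symm)), mul_zero]
    · simp
  have hp0ne : p₀ ≠ 0 := by
    intro h0
    apply hc0
    funext j
    have := hcoeff j
    rw [h0] at this
    simpa using this.symm
  have hdeg : p₀.natDegree ≤ m := by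
    apply Polynomial.natDegree_sum_le_of_forall_le
    intro j _
    apply le_trans (natDegree_C_mul_le _ _)
    simpa using Nat.lt_succ_iff.mp j.isLt
  have heval : ∀ s : ℝ, p₀.eval s = ∑ j : Fin (m+1), c j * s ^ (j:ℕ) := by
    intro s; rw [hp₀]; simp [eval_finset_sum]
  clear_value p₀
  -- orthogonality to monomials
  have hmono : ∀ i : Fin m, ∑ s ∈ T, w s * (p₀.eval s * s ^ (i:ℕ)) = 0 := by
    intro i
    have := congrFun hc i
    simp only [hφ] at this
    simp only [LinearMap.coe_mk, AddHom.coe_mk, Pi.zero_apply] at this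
    rw [show (0:ℝ) = 0 from rfl] at this
    calc ∑ s ∈ T, w s * (p₀.eval s * s ^ (i:ℕ))
        = ∑ s ∈ T, w s * ((∑ j, c j * s ^ (j:ℕ)) * s ^ (i:ℕ)) := by
          congr 1; funext s; rw [heval]
      _ = 0 := this
  -- orthogonality to all lower-degree polys
  have horth : ∀ q : ℝ[X], q.natDegree < m → ∑ s ∈ T, w s * (p₀.eval s * q.eval s) = 0 := by
    intro q hq
    have hev : ∀ s : ℝ, q.eval s = ∑ i ∈ Finset.range m, q.coeff i * s ^ i :=
      fun s => eval_eq_sum_range' hq s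
    calc ∑ s ∈ T, w s * (p₀.eval s * q.eval s)
        = ∑ s ∈ T, ∑ i ∈ Finset.range m, q.coeff i * (w s * (p₀.eval s * s ^ i)) := by
          congr 1; funext s
          rw [hev, Finset.mul_sum]
          rw [Finset.mul_sum]
          congr 1; funext i; ring
      _ = ∑ i ∈ Finset.range m, q.coeff i * ∑ s ∈ T, w s * (p₀.eval s * s ^ i) := by
          rw [Finset.sum_comm]
          congr 1; funext i; rw [Finset.mul_sum]
      _ = 0 := by
          apply Finset.sum_eq_zero
          intro i hi
          rw [show ∑ s ∈ T, w s * (p₀.eval s * s ^ i) = 0 from hmono ⟨i, Finset.mem_range.mp hi⟩]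
          ring
  -- degree is exactly m
  have hdeq : p₀.natDegree = m := by
    rcases lt_or_eq_of_le hdeg with hlt | he
    · exfalso
      have hself := horth p₀ hlt
      have hallz : ∀ s ∈ T, p₀.eval s = 0 := by
        intro s hs
        have h1 : ∀ s ∈ T, 0 ≤ w s * (p₀.eval s * p₀.eval s) := by
          intro s hs
          have := (hw s hs).le
          nlinarith [sq_nonneg (p₀.eval s)]
        have h2 := (Finset.sum_eq_zero_iff_of_nonneg h1).mp hself s hs
        rcases mul_eq_zero.mp h2 with h3 | h3
        · exact absurd h3 (ne_of_gt (hw s hs))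
        · exact mul_self_eq_zero.mp h3
      have hsub : T ⊆ p₀.roots.toFinset := by
        intro s hs
        rw [Multiset.mem_toFinset, mem_roots hp0ne]
        exact hallz s hs
      have := Finset.card_le_card hsub
      have h2 := Multiset.toFinset_card_le p₀.roots
      have h3 := p₀.card_roots'
      omega
    · exact he
  refine ⟨C p₀.leadingCoeff⁻¹ * p₀, ?_, ?_, ?_⟩
  · have hlc : p₀.leadingCoeff ≠ 0 := leadingCoeff_ne_zero.mpr hp0ne
    exact monic_C_mul_of_mul_leadingCoeff_eq_one (by field_simp)
  · rw [natDegree_C_mul (inv_ne_zero (leadingCoeff_ne_zero.mpr hp0ne))]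
    exact hdeq
  · intro q hq
    have := horth q hq
    calc ∑ s ∈ T, w s * ((C p₀.leadingCoeff⁻¹ * p₀).eval s * q.eval s)
        = ∑ s ∈ T, p₀.leadingCoeff⁻¹ * (w s * (p₀.eval s * q.eval s)) :=
          Finset.sum_congr rfl fun s _ => by rw [eval_mul, eval_C]; ring
      _ = p₀.leadingCoeff⁻¹ * ∑ s ∈ T, w s * (p₀.eval s * q.eval s) :=
          (Finset.mul_sum _ _ _).symm
      _ = 0 := by rw [this, mul_zero]

lemma sign_const (g : ℝ[X]) (hg : g ≠ 0) (hroots : g.roots = 0) :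
    ∀ x y : ℝ, 0 < g.eval x * g.eval y := by
  have hne : ∀ x : ℝ, g.eval x ≠ 0 := by
    intro x hx
    have hx' : x ∈ g.roots := by rw [mem_roots hg]; exact hx
    rw [hroots] at hx'; simp at hx'
  intro x y
  rcases lt_or_gt_of_ne (mul_ne_zero (hne x) (hne y)) with hlt | hgt
  · exfalso
    have h0 : (0:ℝ) ∈ Set.uIcc (g.eval x) (g.eval y) := by
      rcases mul_neg_iff.mp hlt with ⟨h1, h2⟩ | ⟨h1, h2⟩
      · exact Set.mem_uIcc.mpr (Or.inr ⟨h2.le, h1.le⟩)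
      · exact Set.mem_uIcc.mpr (Or.inl ⟨h1.le, h2.le⟩)
    obtain ⟨z, _, hz⟩ :=
      intermediate_value_uIcc (Continuous.continuousOn
        (Polynomial.continuous g) (s := Set.uIcc x y)) h0
    exact hne z hz
  · exact hgt

lemma exists_sign_roots (T : Finset ℝ) (w : ℝ → ℝ) (hw : ∀ s ∈ T, 0 < w s) (m : ℕ)
    (hcard : m + 1 ≤ T.card) (hne : T.Nonempty) (p : ℝ[X]) (hmonic : p.Monic)
    (hdeg : p.natDegree = m)
    (horth : ∀ q : ℝ[X], q.natDegree < m → ∑ s ∈ T, w s * (p.eval s * q.eval s) = 0) :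
    ∃ R : Finset ℝ, R.card = m ∧
      ∀ r ∈ R, p.eval r = 0 ∧ r ∈ Set.Ioo (T.min' hne) (T.max' hne) := by
  set α := T.min' hne with hα
  set β := T.max' hne with hβ
  have hp0 : p ≠ 0 := hmonic.ne_zero
  set RT := p.roots.toFinset with hRT
  set B := RT.filter (fun r => r ∈ Set.Ioo α β ∧ Odd (p.roots.count r)) with hB
  have hBsub : B ⊆ RT := Finset.filter_subset _ _
  obtain ⟨g, hgfact⟩ := p.prod_multiset_X_sub_C_dvd
  have hQg : (p.roots.map fun a => X - C a).prod * g ≠ 0 := hgfact ▸ hp0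
  have hg0 : g ≠ 0 := right_ne_zero_of_mul hQg
  have hgroots : g.roots = 0 := by
    have h1 : p.roots = ((p.roots.map fun a => X - C a).prod * g).roots := by rw [← hgfact]
    rw [roots_mul hQg, roots_multiset_prod_X_sub_C] at h1
    exact (left_eq_add.mp h1)
  have hgsign := sign_const g hg0 hgroots
  set q : ℝ[X] := ∏ r ∈ B, (X - C r) with hq
  have hqdeg : q.natDegree = B.card := by
    rw [hq, natDegree_prod_of_monic _ _ (fun r _ => monic_X_sub_C r)]
    simp [natDegree_X_sub_C]
  set e : ℝ → ℕ := fun r => p.roots.count r + (if r ∈ B then 1 else 0) with he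
  have hQeval : ∀ x : ℝ, p.eval x = (∏ r ∈ RT, (x - r) ^ p.roots.count r) * g.eval x := by
    intro x
    conv_lhs => rw [hgfact]
    rw [eval_mul]
    congr 1
    rw [eval_multiset_prod, Multiset.map_map, Finset.prod_multiset_map_count]
    exact Finset.prod_congr rfl fun r _ => by simp
  have hqeval : ∀ x : ℝ, q.eval x = ∏ r ∈ B, (x - r) := by
    intro x; rw [hq, eval_prod]; exact Finset.prod_congr rfl fun r _ => by simp
  have hpq : ∀ x : ℝ, p.eval x * q.eval x = g.eval x * ∏ r ∈ RT, (x - r) ^ e r := by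
    intro x
    rw [hQeval, hqeval]
    have h2 : ∏ r ∈ RT, (x - r) ^ e r
        = (∏ r ∈ RT, (x - r) ^ p.roots.count r) * ∏ r ∈ RT, (if r ∈ B then (x - r) else 1) := by
      rw [← Finset.prod_mul_distrib]
      refine Finset.prod_congr rfl fun r _ => ?_
      by_cases hrB : r ∈ B <;> simp [he, hrB, pow_add]
    rw [h2, Finset.prod_ite_mem, Finset.inter_eq_right.mpr hBsub]
    ring
  have hsign : ∀ x ∈ Set.Icc α β, ∀ y ∈ Set.Icc α β,
      0 ≤ (p.eval x * q.eval x) * (p.eval y * q.eval y) := by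
    intro x hx y hy
    rw [hpq, hpq]
    have keyprod : 0 ≤ (∏ r ∈ RT, (x - r) ^ e r) * ∏ r ∈ RT, (y - r) ^ e r := by
      rw [← Finset.prod_mul_distrib]
      apply Finset.prod_nonneg
      intro r hr
      rw [← mul_pow]
      rcases Nat.even_or_odd (e r) with hpar | hpar
      · exact hpar.pow_nonneg _
      · apply pow_nonneg
        have hrIoo : r ∉ Set.Ioo α β := by
          intro hIoo
          by_cases hrB : r ∈ B
          · rw [he] at hpar
            simp only [if_pos hrB] at hpar
            have hodd : Odd (p.roots.count r) := (Finset.mem_filter.mp hrB).2.2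
            exact (Nat.not_odd_iff_even.mpr (Odd.add_one hodd)) hpar
          · rw [he] at hpar
            simp only [if_neg hrB, add_zero] at hpar
            exact hrB (Finset.mem_filter.mpr ⟨hr, hIoo, hpar⟩)
        rw [Set.mem_Ioo] at hrIoo
        push_neg at hrIoo
        rcases le_or_gt r α with hc | hc
        · have := hx.1; have := hy.1
          nlinarith
        · have hb := hrIoo hc
          have := hx.2; have := hy.2
          nlinarith
    calc (0:ℝ) ≤ (g.eval x * g.eval y) * ((∏ r ∈ RT, (x - r) ^ e r) * ∏ r ∈ RT, (y - r) ^ e r) :=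
          mul_nonneg (hgsign x y).le keyprod
      _ = (g.eval x * ∏ r ∈ RT, (x - r) ^ e r) * (g.eval y * ∏ r ∈ RT, (y - r) ^ e r) := by ring
  -- cardinality of B
  have hcardRT : RT.card ≤ m := by
    have h0 : RT.card = p.roots.toFinset.card := by rw [hRT]
    have h1 := Multiset.toFinset_card_le p.roots
    have h2 := p.card_roots'
    omega
  have hBle : B.card ≤ m := le_trans (Finset.card_le_card hBsub) hcardRT
  have hBge : m ≤ B.card := by
    by_contra hlt
    push_neg at hlt
    have horthq := horth q (hqdeg ▸ hlt)
    have hTIcc : ∀ s ∈ T, s ∈ Set.Icc α β := fun s hs => ⟨T.min'_le s hs, T.le_max' s hs⟩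
    have hzero : ∀ s ∈ T, p.eval s * q.eval s = 0 := by
      by_contra hcon
      push_neg at hcon
      obtain ⟨s₀, hs₀T, hs₀⟩ := hcon
      have hpos : 0 < ∑ s ∈ T, w s * ((p.eval s * q.eval s) * (p.eval s₀ * q.eval s₀)) := by
        apply Finset.sum_pos'
        · intro s hs
          exact mul_nonneg (hw s hs).le (hsign s (hTIcc s hs) s₀ (hTIcc s₀ hs₀T))
        · exact ⟨s₀, hs₀T, mul_pos (hw s₀ hs₀T)
            (lt_of_le_of_ne (hsign s₀ (hTIcc s₀ hs₀T) s₀ (hTIcc s₀ hs₀T))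
              (Ne.symm (mul_ne_zero hs₀ hs₀)))⟩
      have hzero' : ∑ s ∈ T, w s * ((p.eval s * q.eval s) * (p.eval s₀ * q.eval s₀)) = 0 := by
        calc ∑ s ∈ T, w s * ((p.eval s * q.eval s) * (p.eval s₀ * q.eval s₀))
            = (∑ s ∈ T, w s * (p.eval s * q.eval s)) * (p.eval s₀ * q.eval s₀) := by
              rw [Finset.sum_mul]
              exact Finset.sum_congr rfl fun s _ => by ring
          _ = 0 := by rw [horthq, zero_mul]
      rw [hzero'] at hpos
      exact lt_irrefl 0 hpos
    have hTroots : T ⊆ RT := by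
      intro s hs
      rw [hRT, Multiset.mem_toFinset, mem_roots hp0]
      rcases mul_eq_zero.mp (hzero s hs) with h' | h'
      · exact h'
      · rw [hqeval] at h'
        obtain ⟨r, hrB, hr0⟩ := Finset.prod_eq_zero_iff.mp h'
        have : s = r := by linarith [sub_eq_zero.mp hr0]
        have hrRT := hBsub hrB
        rw [hRT, Multiset.mem_toFinset, mem_roots hp0] at hrRT
        rw [this]
        exact hrRT
    have := Finset.card_le_card hTroots
    omega
  have hBcard : B.card = m := le_antisymm hBle hBge
  refine ⟨B, hBcard, fun r hr => ?_⟩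
  have hrRT := hBsub hr
  rw [hRT, Multiset.mem_toFinset, mem_roots hp0] at hrRT
  exact ⟨hrRT, (Finset.mem_filter.mp hr).2.1⟩

lemma gauss (T : Finset ℝ) (w : ℝ → ℝ) (hw : ∀ s ∈ T, 0 < w s) (m : ℕ) (hm : 1 ≤ m)
    (hcard : m + 1 ≤ T.card) (hne : T.Nonempty) :
    ∃ (t : Fin m → ℝ) (v : Fin m → ℝ), StrictMono t ∧
      (∀ i, t i ∈ Set.Ioo (T.min' hne) (T.max' hne)) ∧ (∀ i, 0 ≤ v i) ∧
      ∀ f : ℝ[X], f.natDegree ≤ 2 * m - 1 →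
        ∑ s ∈ T, w s * f.eval s = ∑ i, v i * f.eval (t i) := by
  obtain ⟨p, hmonic, hdeg, horth⟩ := exists_orth T w hw m hcard
  obtain ⟨R, hRcard, hR⟩ := exists_sign_roots T w hw m hcard hne p hmonic hdeg horth
  set t : Fin m → ℝ := fun i => (R.orderIsoOfFin hRcard i : ℝ) with ht
  have htmono : StrictMono t := fun i j hij =>
    Subtype.coe_lt_coe.mpr ((R.orderIsoOfFin hRcard).lt_iff_lt.mpr hij)
  have htinj : Set.InjOn t (Finset.univ : Finset (Fin m)) := Set.injOn_of_injective htmono.injective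
  have htmem : ∀ i, t i ∈ R := fun i => (R.orderIsoOfFin hRcard i).2
  have hproot : ∀ i, p.eval (t i) = 0 := fun i => (hR _ (htmem i)).1
  have htIoo : ∀ i, t i ∈ Set.Ioo (T.min' hne) (T.max' hne) := fun i => (hR _ (htmem i)).2
  have hcards : (Finset.univ : Finset (Fin m)).card = m := by simp
  set v : Fin m → ℝ := fun i => ∑ s ∈ T, w s * (Lagrange.basis Finset.univ t i).eval s with hv
  -- exactness for degree < m
  have hlow : ∀ r : ℝ[X], r.degree < (m : WithBot ℕ) →
      ∑ s ∈ T, w s * r.eval s = ∑ i, v i * r.eval (t i) := by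
    intro r hr
    have hrep := Lagrange.eq_interpolate (v := t) htinj (by rw [hcards]; exact hr)
    calc ∑ s ∈ T, w s * r.eval s
        = ∑ s ∈ T, ∑ i, r.eval (t i) * (w s * (Lagrange.basis Finset.univ t i).eval s) := by
          refine Finset.sum_congr rfl fun s _ => ?_
          conv_lhs => rw [hrep]
          rw [Lagrange.interpolate_apply, eval_finset_sum, Finset.mul_sum]
          exact Finset.sum_congr rfl fun i _ => by rw [eval_mul, eval_C]; ring
      _ = ∑ i, v i * r.eval (t i) := by
          rw [Finset.sum_comm]
          refine Finset.sum_congr rfl fun i _ => ?_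
          simp only [hv]
          rw [Finset.sum_mul]
          exact Finset.sum_congr rfl fun s _ => by ring
  have hp0 : p ≠ 0 := hmonic.ne_zero
  have hpdeg : p.degree = (m : WithBot ℕ) := by rw [degree_eq_natDegree hp0, hdeg]
  -- general exactness
  have hexact : ∀ f : ℝ[X], f.natDegree ≤ 2 * m - 1 →
      ∑ s ∈ T, w s * f.eval s = ∑ i, v i * f.eval (t i) := by
    intro f hf
    have hdiv : f %ₘ p + p * (f /ₘ p) = f := modByMonic_add_div f p
    have hqdeg : (f /ₘ p).natDegree < m := by
      rw [natDegree_divByMonic f hmonic, hdeg]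
      omega
    have hrdeg : (f %ₘ p).degree < (m : WithBot ℕ) := hpdeg ▸ degree_modByMonic_lt f hmonic
    have horthq := horth (f /ₘ p) hqdeg
    calc ∑ s ∈ T, w s * f.eval s
        = ∑ s ∈ T, (w s * (p.eval s * (f /ₘ p).eval s) + w s * (f %ₘ p).eval s) := by
          refine Finset.sum_congr rfl fun s _ => ?_
          conv_lhs => rw [← hdiv]
          rw [eval_add, eval_mul]; ring
      _ = ∑ s ∈ T, w s * (p.eval s * (f /ₘ p).eval s) + ∑ s ∈ T, w s * (f %ₘ p).eval s :=
          Finset.sum_add_distrib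
      _ = ∑ i, v i * (f %ₘ p).eval (t i) := by rw [horthq, hlow _ hrdeg, zero_add]
      _ = ∑ i, v i * f.eval (t i) := by
          refine Finset.sum_congr rfl fun i _ => ?_
          congr 1
          conv_rhs => rw [← hdiv]
          rw [eval_add, eval_mul, hproot i, zero_mul, add_zero]
  -- nonnegativity of weights
  have hvnn : ∀ i, 0 ≤ v i := by
    intro i
    have hbdeg : ((Lagrange.basis Finset.univ t i) ^ 2).natDegree ≤ 2 * m - 1 := by
      rw [natDegree_pow, Lagrange.natDegree_basis htinj (Finset.mem_univ i), hcards]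
      omega
    have hsq := hexact _ hbdeg
    have hrhs : ∑ j, v j * ((Lagrange.basis Finset.univ t i) ^ 2).eval (t j) = v i := by
      rw [Finset.sum_eq_single i]
      · rw [eval_pow, Lagrange.eval_basis_self htinj (Finset.mem_univ i)]; ring
      · intro j _ hji
        rw [eval_pow, Lagrange.eval_basis_of_ne (Ne.symm hji) (Finset.mem_univ j)]
        ring
      · simp
    rw [hrhs] at hsq
    rw [← hsq]
    apply Finset.sum_nonneg
    intro s hs
    rw [eval_pow]
    exact mul_nonneg (hw s hs).le (sq_nonneg _)
  exact ⟨t, v, htmono, htIoo, hvnn, hexact⟩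

lemma radau (a b : ℝ) (hab : a < b) (m : ℕ) (hm : 1 ≤ m) (T : Finset ℝ) (w : ℝ → ℝ)
    (hw : ∀ s ∈ T, 0 < w s) (hIcc : ∀ s ∈ T, s ∈ Set.Icc a b) (hmass : ∑ s ∈ T, w s = 1)
    (hbig : m + 1 ≤ (T.erase a).card) :
    ∃ t v : Fin (m+1) → ℝ, Monotone t ∧ t 0 = a ∧ (∀ i, t i ∈ Set.Icc a b) ∧
      (∀ i, 0 ≤ v i) ∧ ∀ f : ℝ[X], f.natDegree ≤ 2 * m →
        ∑ s ∈ T, w s * f.eval s = ∑ i, v i * f.eval (t i) := by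
  set T' := T.erase a with hT'
  set w' : ℝ → ℝ := fun s => w s * (s - a) with hw'def
  have hsubT : T' ⊆ T := Finset.erase_subset _ _
  have hgt : ∀ s ∈ T', a < s := by
    intro s hs
    rcases Finset.mem_erase.mp hs with ⟨hne, hsT⟩
    exact lt_of_le_of_ne (hIcc s hsT).1 (Ne.symm hne)
  have hw' : ∀ s ∈ T', 0 < w' s := fun s hs =>
    mul_pos (hw s (hsubT hs)) (sub_pos.mpr (hgt s hs))
  have hne' : T'.Nonempty := Finset.card_pos.mp (by omega)
  obtain ⟨u, v', humono, huIoo, hvnn', hexact'⟩ := gauss T' w' hw' m hm hbig hne'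
  have hua : ∀ i, a < u i := fun i =>
    lt_trans (hgt _ (T'.min'_mem hne')) (huIoo i).1
  have hub : ∀ i, u i ≤ b := fun i =>
    le_trans (huIoo i).2.le (hIcc _ (hsubT (T'.max'_mem hne'))).2
  set t : Fin (m+1) → ℝ := Fin.cons a u with htdef
  set v : Fin (m+1) → ℝ :=
    Fin.cons (1 - ∑ i, v' i / (u i - a)) (fun i => v' i / (u i - a)) with hvdef
  have ht0 : t 0 = a := rfl
  have hts : ∀ i : Fin m, t i.succ = u i := fun i => by simp [htdef]
  have htmono : Monotone t := by
    have hsm : StrictMono t := by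
      intro i j hij
      rcases Fin.eq_zero_or_eq_succ j with rfl | ⟨j', rfl⟩
      · exact absurd hij (Fin.not_lt_zero i)
      · rcases Fin.eq_zero_or_eq_succ i with rfl | ⟨i', rfl⟩
        · rw [ht0, hts]; exact hua j'
        · rw [hts, hts]; exact humono (Fin.succ_lt_succ_iff.mp hij)
    exact hsm.monotone
  have htIcc : ∀ i, t i ∈ Set.Icc a b := by
    intro i
    rcases Fin.eq_zero_or_eq_succ i with rfl | ⟨i', rfl⟩
    · rw [ht0]; exact ⟨le_refl a, hab.le⟩
    · rw [hts]; exact ⟨(hua i').le, hub i'⟩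
  have hw'a : w' a = 0 := by rw [hw'def]; simp
  -- main exactness
  have hexact : ∀ f : ℝ[X], f.natDegree ≤ 2 * m →
      ∑ s ∈ T, w s * f.eval s = ∑ i, v i * f.eval (t i) := by
    intro f hf
    obtain ⟨g, hg⟩ := Polynomial.X_sub_C_dvd_sub_C_eval (a := a) (p := f)
    have hfeq : ∀ x : ℝ, f.eval x = f.eval a + (x - a) * g.eval x := by
      intro x
      have h1 := congrArg (eval x) hg
      simp only [eval_sub, eval_mul, eval_C, eval_X] at h1
      linarith
    have hgdeg : g.natDegree ≤ 2 * m - 1 := by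
      by_cases hg0 : g = 0
      · rw [hg0, natDegree_zero]; omega
      · have h1 : ((X - C a) * g).natDegree = 1 + g.natDegree := by
          rw [natDegree_mul (X_sub_C_ne_zero a) hg0, natDegree_X_sub_C]
        rw [← hg] at h1
        have h2 : (f - C (f.eval a)).natDegree ≤ 2 * m := by
          refine le_trans (natDegree_sub_le _ _) ?_
          rw [natDegree_C]
          exact max_le hf (by omega)
        omega
    have hS : ∀ i : Fin m, u i - a ≠ 0 := fun i => sub_ne_zero.mpr (ne_of_gt (hua i))
    calc ∑ s ∈ T, w s * f.eval s
        = ∑ s ∈ T, (w s * f.eval a + w' s * g.eval s) := by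
          refine Finset.sum_congr rfl fun s _ => ?_
          rw [hfeq s, hw'def]; ring
      _ = (∑ s ∈ T, w s) * f.eval a + ∑ s ∈ T, w' s * g.eval s := by
          rw [Finset.sum_add_distrib, Finset.sum_mul]
      _ = f.eval a + ∑ s ∈ T', w' s * g.eval s := by
          rw [hmass, one_mul]
          congr 1
          refine (Finset.sum_erase _ ?_).symm
          rw [hw'a, zero_mul]
      _ = f.eval a + ∑ i, v' i * g.eval (u i) := by rw [hexact' g hgdeg]
      _ = ∑ i, v i * f.eval (t i) := by
          rw [Fin.sum_univ_succ]
          simp only [hvdef, htdef, Fin.cons_zero, Fin.cons_succ]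
          have hterm : ∀ i : Fin m, v' i / (u i - a) * f.eval (u i)
              = v' i / (u i - a) * f.eval a + v' i * g.eval (u i) := by
            intro i
            rw [hfeq (u i), mul_add]
            congr 1
            calc v' i / (u i - a) * ((u i - a) * g.eval (u i))
                = v' i * g.eval (u i) * ((u i - a) / (u i - a)) := by ring
              _ = v' i * g.eval (u i) := by rw [div_self (hS i), mul_one]
          rw [Finset.sum_congr rfl (fun i _ => hterm i), Finset.sum_add_distrib,
            ← Finset.sum_mul]
          ring
  -- nonnegativity
  have hvnn : ∀ i, 0 ≤ v i := by
    intro i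
    rcases Fin.eq_zero_or_eq_succ i with rfl | ⟨i', rfl⟩
    · -- head weight
      set f₀ : ℝ[X] := (∏ i : Fin m, (X - C (u i))) ^ 2 with hf₀
      have hproddeg : (∏ i : Fin m, (X - C (u i))).natDegree = m := by
        rw [natDegree_prod_of_monic _ _ (fun i _ => monic_X_sub_C (u i))]
        simp [natDegree_X_sub_C]
      have hf₀deg : f₀.natDegree ≤ 2 * m := by
        rw [hf₀, natDegree_pow, hproddeg]
      have hevals : ∀ x : ℝ, f₀.eval x = (∏ i : Fin m, (x - u i)) ^ 2 := by
        intro x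
        rw [hf₀, eval_pow, eval_prod]
        congr 1
        exact Finset.prod_congr rfl fun i _ => by simp
      have hzero : ∀ i : Fin m, f₀.eval (u i) = 0 := by
        intro i
        rw [hevals]
        rw [Finset.prod_eq_zero (Finset.mem_univ i) (by ring)]
        ring
      have hid := hexact f₀ hf₀deg
      rw [Fin.sum_univ_succ] at hid
      simp only [hvdef, htdef, Fin.cons_zero, Fin.cons_succ] at hid
      have hrest : ∑ i : Fin m, v' i / (u i - a) * f₀.eval (u i) = 0 :=
        Finset.sum_eq_zero fun i _ => by rw [hzero i, mul_zero]
      rw [hrest, add_zero] at hid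
      have hlhs : 0 ≤ ∑ s ∈ T, w s * f₀.eval s := by
        apply Finset.sum_nonneg
        intro s hs
        rw [hevals]
        exact mul_nonneg (hw s hs).le (sq_nonneg _)
      have hfa : 0 < f₀.eval a := by
        rw [hevals]
        have hne0 : (∏ i : Fin m, (a - u i)) ≠ 0 :=
          Finset.prod_ne_zero_iff.mpr fun i _ => sub_ne_zero.mpr (ne_of_lt (hua i))
        exact lt_of_le_of_ne (sq_nonneg _) (Ne.symm (pow_ne_zero 2 hne0))
      show (0:ℝ) ≤ v 0
      have hv0 : v 0 = 1 - ∑ i, v' i / (u i - a) := by rw [hvdef]; simp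
      rw [hv0]
      nlinarith [hid, hlhs, hfa]
    · have : v i'.succ = v' i' / (u i' - a) := by rw [hvdef]; simp
      rw [this]
      exact div_nonneg (hvnn' i') (sub_pos.mpr (hua i')).le
  exact ⟨t, v, htmono, ht0, htIcc, hvnn, hexact⟩

lemma main_rep (N : ℕ) (hN : 0 < N) (a b : ℝ) (hab : a < b) (M : ℕ)
    (hM : M = if Odd N then (N + 1) / 2 else (N + 2) / 2) (hMpos : 0 < M)
    (T : Finset ℝ) (w : ℝ → ℝ) (hw : ∀ s ∈ T, 0 < w s) (hIcc : ∀ s ∈ T, s ∈ Set.Icc a b)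
    (hmass : ∑ s ∈ T, w s = 1) (hbig : M + 1 ≤ (T.erase a).card) :
    ∃ c t : Fin M → ℝ, (∀ j, 0 ≤ c j) ∧ (∑ j, c j = 1) ∧ (∀ j, t j ∈ Set.Icc a b) ∧
      Monotone t ∧ (Even N → t ⟨0, hMpos⟩ = a) ∧
      ∀ i : Fin N, ∑ j, c j * t j ^ ((i : ℕ) + 1) = ∑ s ∈ T, w s * s ^ ((i : ℕ) + 1) := by
  have hcardT : M + 1 ≤ T.card :=
    le_trans hbig (Finset.card_le_card (Finset.erase_subset _ _))
  have hneT : T.Nonempty := Finset.card_pos.mp (by omega)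
  by_cases hodd : Odd N
  · -- odd case : Gaussian quadrature with M nodes
    have h2M : 2 * M = N + 1 := by
      rw [hM, if_pos hodd]
      obtain ⟨k, hk⟩ := hodd
      omega
    obtain ⟨t, v, htmono, htIoo, hvnn, hexact⟩ := gauss T w hw M hMpos hcardT hneT
    have hamin : a ≤ T.min' hneT := (hIcc _ (T.min'_mem hneT)).1
    have hbmax : T.max' hneT ≤ b := (hIcc _ (T.max'_mem hneT)).2
    refine ⟨v, t, hvnn, ?_, ?_, htmono.monotone, ?_, ?_⟩
    · have h1 := hexact 1 (by simp)
      simp only [eval_one, mul_one] at h1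
      rw [hmass] at h1
      exact h1.symm
    · exact fun j => ⟨le_trans hamin (htIoo j).1.le, le_trans (htIoo j).2.le hbmax⟩
    · intro he
      exact absurd he (Nat.not_even_iff_odd.mpr hodd)
    · intro i
      have hdeg : (X ^ ((i : ℕ) + 1) : ℝ[X]).natDegree ≤ 2 * M - 1 := by
        rw [natDegree_X_pow]
        omega
      have := hexact (X ^ ((i : ℕ) + 1)) hdeg
      simp only [eval_pow, eval_X] at this
      exact this.symm
  · -- even case : Radau quadrature anchored at a
    have heven : Even N := Nat.not_odd_iff_even.mp hodd
    obtain ⟨k, hk⟩ := heven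
    have hk1 : 1 ≤ k := by omega
    have hMk : M = k + 1 := by
      rw [hM, if_neg hodd]
      omega
    subst hMk
    obtain ⟨t, v, htmono, ht0, htIcc, hvnn, hexact⟩ :=
      radau a b hab k hk1 T w hw hIcc hmass (by omega)
    refine ⟨v, t, hvnn, ?_, htIcc, htmono, ?_, ?_⟩
    · have h1 := hexact 1 (by simp)
      simp only [eval_one, mul_one] at h1
      rw [hmass] at h1
      exact h1.symm
    · intro _
      exact ht0
    · intro i
      have hdeg : (X ^ ((i : ℕ) + 1) : ℝ[X]).natDegree ≤ 2 * k := by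
        rw [natDegree_X_pow]
        omega
      have := hexact (X ^ ((i : ℕ) + 1)) hdeg
      simp only [eval_pow, eval_X] at this
      exact this.symm

/-- From hull membership extract a finitely supported probability measure with
positive weights whose moments are `x`. -/
lemma hull_measure (N : ℕ) (a b : ℝ)
    (x : Fin N → ℝ)
    (hx : x ∈ convexHull ℝ ((fun t : ℝ => fun i : Fin N => t ^ ((i : ℕ) + 1)) '' Set.Icc a b)) :
    ∃ (T : Finset ℝ) (W : ℝ → ℝ), (∀ s ∈ T, s ∈ Set.Icc a b) ∧ (∀ s ∈ T, 0 < W s) ∧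
      (∀ s, s ∉ T → W s = 0) ∧ ∑ s ∈ T, W s = 1 ∧
      ∀ i : Fin N, x i = ∑ s ∈ T, W s * s ^ ((i : ℕ) + 1) := by
  rw [_root_.convexHull_eq] at hx
  obtain ⟨ι, tt, w, z, hw0, hw1, hz, hcm⟩ := hx
  -- choose preimage values
  have hzs : ∀ k ∈ tt, ∃ s : ℝ, s ∈ Set.Icc a b ∧ z k = fun i : Fin N => s ^ ((i : ℕ) + 1) := by
    intro k hk
    obtain ⟨s, hs, hzk⟩ := hz k hk
    exact ⟨s, hs, hzk.symm⟩
  classical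
  choose! sv hsv using hzs
  have hxeq : ∀ i : Fin N, x i = ∑ k ∈ tt, w k * (sv k) ^ ((i : ℕ) + 1) := by
    intro i
    have h1 : tt.centerMass w z = ∑ k ∈ tt, w k • z k := Finset.centerMass_eq_of_sum_1 _ _ hw1
    rw [h1] at hcm
    have := congrFun hcm i
    rw [← this, Finset.sum_apply]
    refine Finset.sum_congr rfl fun k hk => ?_
    rw [Pi.smul_apply, smul_eq_mul, (hsv k hk).2]
  set tp := tt.filter (fun k => 0 < w k) with htp
  set T : Finset ℝ := tp.image sv with hT
  set W : ℝ → ℝ := fun r => ∑ k ∈ tp.filter (fun k => sv k = r), w k with hW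
  have hmaps : ∀ k ∈ tp, sv k ∈ T := fun k hk => Finset.mem_image_of_mem sv hk
  have hfib : ∀ f : ℝ → ℝ,
      ∑ r ∈ T, ∑ k ∈ tp.filter (fun k => sv k = r), w k * f (sv k) = ∑ k ∈ tt, w k * f (sv k) := by
    intro f
    rw [Finset.sum_fiberwise_of_maps_to hmaps]
    rw [htp]
    refine Finset.sum_filter_of_ne fun k hk hne => ?_
    rcases (hw0 k hk).lt_or_eq with hpos | heq
    · exact hpos
    · exact absurd (by rw [← heq, zero_mul]) hne
  have hWf : ∀ (f : ℝ → ℝ) (r : ℝ),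
      ∑ k ∈ tp.filter (fun k => sv k = r), w k * f (sv k) = W r * f r := by
    intro f r
    rw [hW, Finset.sum_mul]
    refine Finset.sum_congr rfl fun k hk => ?_
    rw [(Finset.mem_filter.mp hk).2]
  refine ⟨T, W, ?_, ?_, ?_, ?_, ?_⟩
  · intro s hs
    obtain ⟨k, hk, rfl⟩ := Finset.mem_image.mp hs
    exact (hsv k (Finset.mem_filter.mp hk).1).1
  · intro s hs
    obtain ⟨k, hk, rfl⟩ := Finset.mem_image.mp hs
    rw [hW]
    apply Finset.sum_pos'
    · intro l hl
      exact ((Finset.mem_filter.mp ((Finset.filter_subset _ _) hl)).2).le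
    · exact ⟨k, Finset.mem_filter.mpr ⟨hk, rfl⟩, (Finset.mem_filter.mp hk).2⟩
  · intro s hs
    rw [hW]
    apply Finset.sum_eq_zero
    intro k hk
    exfalso
    apply hs
    rw [← (Finset.mem_filter.mp hk).2]
    exact hmaps k (Finset.mem_filter.mp hk).1
  · have := hfib (fun _ => 1)
    simp only [mul_one] at this
    rw [← hw1]
    rw [← this]
  · intro i
    rw [hxeq i, ← hfib (fun s => s ^ ((i : ℕ) + 1))]
    exact Finset.sum_congr rfl fun r _ => (hWf (fun s => s ^ ((i : ℕ) + 1)) r)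

lemma exists_P (a b : ℝ) (hab : a < b) (n : ℕ) :
    ∃ P : Finset ℝ, P.card = n ∧ ∀ r ∈ P, r ∈ Set.Ioo a b := by
  classical
  set f : ℕ → ℝ := fun j => a + (b - a) * ((j : ℝ) + 1) / (n + 1) with hf
  refine ⟨(Finset.range n).image f, ?_, ?_⟩
  · rw [Finset.card_image_of_injOn, Finset.card_range]
    intro j1 _ j2 _ heq
    rw [hf] at heq
    simp only [add_right_inj] at heq
    have hba : b - a ≠ 0 := sub_ne_zero.mpr (ne_of_gt hab)
    have hn1 : ((n : ℝ) + 1) ≠ 0 := by positivity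
    field_simp at heq
    have heq' : (j1 : ℝ) = j2 := by linarith
    exact_mod_cast heq'
  · intro r hr
    obtain ⟨j, hj, rfl⟩ := Finset.mem_image.mp hr
    rw [Finset.mem_range] at hj
    have hn1 : (0:ℝ) < (n : ℝ) + 1 := by positivity
    constructor
    · rw [hf]
      have : 0 < (b - a) * ((j : ℝ) + 1) / (n + 1) := by
        apply div_pos (mul_pos (sub_pos.mpr hab) (by positivity)) hn1
      simp only []
      linarith
    · rw [hf]
      have hlt : ((j : ℝ) + 1) / ((n : ℝ) + 1) < 1 := by
        rw [div_lt_one hn1]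
        have : (j : ℝ) < n := Nat.cast_lt.mpr hj
        linarith
      have h2 : (b - a) * (((j : ℝ) + 1) / ((n : ℝ) + 1)) < (b - a) * 1 :=
        mul_lt_mul_of_pos_left hlt (sub_pos.mpr hab)
      simp only []
      rw [mul_div_assoc]
      linarith

lemma image_isClosed (N M : ℕ) (hMpos : 0 < M) (a b : ℝ) :
    IsClosed ((fun p : (Fin M → ℝ) × (Fin M → ℝ) =>
        fun i : Fin N => ∑ j, p.1 j * p.2 j ^ ((i : ℕ) + 1)) ''
      {p | (∀ j, 0 ≤ p.1 j) ∧ (∑ j, p.1 j = 1) ∧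
        (∀ j, p.2 j ∈ Set.Icc a b) ∧ Monotone p.2 ∧
        (Even N → p.2 ⟨0, hMpos⟩ = a)}) := by
  have hccoord : ∀ j : Fin M, Continuous fun p : (Fin M → ℝ) × (Fin M → ℝ) => p.1 j :=
    fun j => (continuous_apply j).comp continuous_fst
  have htcoord : ∀ j : Fin M, Continuous fun p : (Fin M → ℝ) × (Fin M → ℝ) => p.2 j :=
    fun j => (continuous_apply j).comp continuous_snd
  have hSclosed : IsClosed {p : (Fin M → ℝ) × (Fin M → ℝ) |
      (∀ j, 0 ≤ p.1 j) ∧ (∑ j, p.1 j = 1) ∧ (∀ j, p.2 j ∈ Set.Icc a b) ∧ Monotone p.2 ∧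
      (Even N → p.2 ⟨0, hMpos⟩ = a)} := by
    have h1 : IsClosed {p : (Fin M → ℝ) × (Fin M → ℝ) | ∀ j, 0 ≤ p.1 j} := by
      rw [Set.setOf_forall]
      exact isClosed_iInter fun j => isClosed_le continuous_const (hccoord j)
    have h2 : IsClosed {p : (Fin M → ℝ) × (Fin M → ℝ) | ∑ j, p.1 j = 1} :=
      isClosed_eq (continuous_finset_sum _ fun j _ => hccoord j) continuous_const
    have h3 : IsClosed {p : (Fin M → ℝ) × (Fin M → ℝ) | ∀ j, p.2 j ∈ Set.Icc a b} := by
      rw [Set.setOf_forall]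
      exact isClosed_iInter fun j => isClosed_Icc.preimage (htcoord j)
    have h4 : IsClosed {p : (Fin M → ℝ) × (Fin M → ℝ) | Monotone p.2} := by
      have he : {p : (Fin M → ℝ) × (Fin M → ℝ) | Monotone p.2}
          = ⋂ (i : Fin M), ⋂ (j : Fin M), ⋂ (_ : i ≤ j),
            {p : (Fin M → ℝ) × (Fin M → ℝ) | p.2 i ≤ p.2 j} := by
        ext p
        simp only [Set.mem_iInter, Set.mem_setOf_eq]
        exact ⟨fun h i j hij => h hij, fun h _ _ hij => h _ _ hij⟩
      rw [he]
      exact isClosed_iInter fun i => isClosed_iInter fun j => isClosed_iInter fun _ =>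
        isClosed_le (htcoord i) (htcoord j)
    have h5 : IsClosed {p : (Fin M → ℝ) × (Fin M → ℝ) | Even N → p.2 ⟨0, hMpos⟩ = a} := by
      by_cases hE : Even N
      · have he : {p : (Fin M → ℝ) × (Fin M → ℝ) | Even N → p.2 ⟨0, hMpos⟩ = a}
            = {p : (Fin M → ℝ) × (Fin M → ℝ) | p.2 ⟨0, hMpos⟩ = a} := by
          ext p; simp [hE]
        rw [he]
        exact isClosed_eq (htcoord ⟨0, hMpos⟩) continuous_const
      · have he : {p : (Fin M → ℝ) × (Fin M → ℝ) | Even N → p.2 ⟨0, hMpos⟩ = a} = Set.univ := by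
          ext p; simp [hE]
        rw [he]
        exact isClosed_univ
    have heq : {p : (Fin M → ℝ) × (Fin M → ℝ) |
        (∀ j, 0 ≤ p.1 j) ∧ (∑ j, p.1 j = 1) ∧ (∀ j, p.2 j ∈ Set.Icc a b) ∧ Monotone p.2 ∧
        (Even N → p.2 ⟨0, hMpos⟩ = a)}
        = {p : (Fin M → ℝ) × (Fin M → ℝ) | ∀ j, 0 ≤ p.1 j} ∩
          ({p | ∑ j, p.1 j = 1} ∩ ({p | ∀ j, p.2 j ∈ Set.Icc a b} ∩
          ({p | Monotone p.2} ∩ {p | Even N → p.2 ⟨0, hMpos⟩ = a}))) := by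
      ext p
      simp only [Set.mem_inter_iff, Set.mem_setOf_eq]
    rw [heq]
    exact h1.inter (h2.inter (h3.inter (h4.inter h5)))
  have hScompact : IsCompact {p : (Fin M → ℝ) × (Fin M → ℝ) |
      (∀ j, 0 ≤ p.1 j) ∧ (∑ j, p.1 j = 1) ∧ (∀ j, p.2 j ∈ Set.Icc a b) ∧ Monotone p.2 ∧
      (Even N → p.2 ⟨0, hMpos⟩ = a)} := by
    have hK : IsCompact ((Set.univ.pi fun _ : Fin M => Set.Icc (0:ℝ) 1) ×ˢ
        (Set.univ.pi fun _ : Fin M => Set.Icc a b)) :=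
      (isCompact_univ_pi fun _ => isCompact_Icc).prod (isCompact_univ_pi fun _ => isCompact_Icc)
    apply IsCompact.of_isClosed_subset hK hSclosed
    rintro p ⟨hc0, hc1, htIcc, -, -⟩
    constructor
    · intro j _
      refine ⟨hc0 j, ?_⟩
      rw [← hc1]
      exact Finset.single_le_sum (fun k _ => hc0 k) (Finset.mem_univ j)
    · intro j _
      exact htIcc j
  have hFcont : Continuous (fun p : (Fin M → ℝ) × (Fin M → ℝ) =>
      fun i : Fin N => ∑ j, p.1 j * p.2 j ^ ((i : ℕ) + 1)) := by
    apply continuous_pi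
    intro i
    exact continuous_finset_sum _ fun j _ => (hccoord j).mul ((htcoord j).pow _)
  exact (hScompact.image hFcont).isClosed

/-- The image of the evaluation map on the set `Nam_N` of namings equals the convex
hull of the moment curve over `[t_min, t_max]`. -/
theorem eval_image_eq_convexHull (N : ℕ) (hN : 0 < N) (tmin tmax : ℝ) (h : tmin < tmax)
    (M : ℕ) (hM : M = if Odd N then (N + 1) / 2 else (N + 2) / 2) (hMpos : 0 < M) :
    (fun p : (Fin M → ℝ) × (Fin M → ℝ) =>
        fun i : Fin N => ∑ j, p.1 j * p.2 j ^ ((i : ℕ) + 1)) ''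
      {p | (∀ j, 0 ≤ p.1 j) ∧ (∑ j, p.1 j = 1) ∧
        (∀ j, p.2 j ∈ Set.Icc tmin tmax) ∧ Monotone p.2 ∧
        (Even N → p.2 ⟨0, hMpos⟩ = tmin)} =
    convexHull ℝ ((fun t : ℝ => fun i : Fin N => t ^ ((i : ℕ) + 1)) ''
      Set.Icc tmin tmax) := by
  apply Set.Subset.antisymm
  · -- image ⊆ hull
    rintro _ ⟨p, ⟨hc0, hc1, htIcc, htmono, hanchor⟩, rfl⟩
    have hrw : (fun i : Fin N => ∑ j, p.1 j * p.2 j ^ ((i : ℕ) + 1))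
        = Finset.univ.centerMass p.1 (fun j => fun i : Fin N => p.2 j ^ ((i : ℕ) + 1)) := by
      rw [Finset.centerMass_eq_of_sum_1 _ _ hc1]
      funext i
      rw [Finset.sum_apply]
      exact Finset.sum_congr rfl fun j _ => by
        rw [Pi.smul_apply, smul_eq_mul]
    show (fun i : Fin N => ∑ j, p.1 j * p.2 j ^ ((i : ℕ) + 1)) ∈ _
    rw [hrw]
    exact Finset.centerMass_mem_convexHull _ (fun j _ => hc0 j) (by rw [hc1]; exact one_pos)
      (fun j _ => Set.mem_image_of_mem _ (htIcc j))
  · -- hull ⊆ image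
    intro x hx
    obtain ⟨T₀, W₀, hT₀Icc, hW₀pos, hW₀zero, hW₀mass, hW₀mom⟩ := hull_measure N tmin tmax x hx
    obtain ⟨P, hPcard, hPIoo⟩ := exists_P tmin tmax h (M + 1)
    have hW₀nn : ∀ r : ℝ, 0 ≤ W₀ r := by
      intro r
      by_cases hr : r ∈ T₀
      · exact (hW₀pos r hr).le
      · rw [hW₀zero r hr]
    have haP : ∀ r ∈ P, r ≠ tmin := fun r hr => ne_of_gt (hPIoo r hr).1
    have hM1 : ((M : ℝ) + 1) ≠ 0 := by positivity
    set y : Fin N → ℝ := fun i => ((M : ℝ) + 1)⁻¹ * ∑ r ∈ P, r ^ ((i : ℕ) + 1) with hy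
    set T : Finset ℝ := T₀ ∪ P with hT
    have hsumW₀ : ∀ g : ℝ → ℝ, ∑ r ∈ T, W₀ r * g r = ∑ r ∈ T₀, W₀ r * g r := by
      intro g
      refine (Finset.sum_subset Finset.subset_union_left fun r _ hr => ?_).symm
      rw [hW₀zero r hr, zero_mul]
    have hsumP : ∀ g : ℝ → ℝ, ∑ r ∈ T, (if r ∈ P then 1 else 0) * g r = ∑ r ∈ P, g r := by
      intro g
      rw [← Finset.sum_subset Finset.subset_union_right
        (fun r _ hr => by rw [if_neg hr, zero_mul])]
      exact Finset.sum_congr rfl fun r hr => by rw [if_pos hr, one_mul]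
    have hseq : ∀ n : ℕ,
        (fun i : Fin N => (1 - (1:ℝ)/(n+2)) * x i + ((1:ℝ)/(n+2)) * y i) ∈
        ((fun p : (Fin M → ℝ) × (Fin M → ℝ) =>
            fun i : Fin N => ∑ j, p.1 j * p.2 j ^ ((i : ℕ) + 1)) ''
          {p | (∀ j, 0 ≤ p.1 j) ∧ (∑ j, p.1 j = 1) ∧
            (∀ j, p.2 j ∈ Set.Icc tmin tmax) ∧ Monotone p.2 ∧
            (Even N → p.2 ⟨0, hMpos⟩ = tmin)}) := by
      intro n
      set ε : ℝ := (1:ℝ)/(n+2) with hε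
      have hε0 : 0 < ε := by positivity
      have hε1 : ε < 1 := by
        rw [hε, div_lt_one (by positivity)]
        have : (0:ℝ) ≤ (n:ℝ) := Nat.cast_nonneg n
        linarith
      set Wm : ℝ → ℝ :=
        fun r => (1 - ε) * W₀ r + (ε * ((M : ℝ) + 1)⁻¹) * (if r ∈ P then 1 else 0) with hWm
      have hWmsplit : ∀ g : ℝ → ℝ, ∑ r ∈ T, Wm r * g r
          = (1 - ε) * ∑ r ∈ T₀, W₀ r * g r + (ε * ((M : ℝ) + 1)⁻¹) * ∑ r ∈ P, g r := by
        intro g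
        rw [← hsumW₀ g, ← hsumP g, Finset.mul_sum, Finset.mul_sum, ← Finset.sum_add_distrib]
        refine Finset.sum_congr rfl fun r _ => ?_
        rw [hWm]; ring
      have hpos : ∀ r ∈ T, 0 < Wm r := by
        intro r hr
        rw [hWm]
        rcases Finset.mem_union.mp hr with hr0 | hrP
        · have h1 : 0 < (1 - ε) * W₀ r := mul_pos (by linarith) (hW₀pos r hr0)
          have h2 : 0 ≤ (ε * ((M : ℝ) + 1)⁻¹) * (if r ∈ P then 1 else 0) := by
            apply mul_nonneg (mul_nonneg hε0.le (by positivity))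
            split <;> norm_num
          linarith
        · have h1 : 0 ≤ (1 - ε) * W₀ r := mul_nonneg (by linarith) (hW₀nn r)
          have h2 : 0 < (ε * ((M : ℝ) + 1)⁻¹) * (if r ∈ P then 1 else 0) := by
            rw [if_pos hrP, mul_one]
            exact mul_pos hε0 (by positivity)
          linarith
      have hIccT : ∀ r ∈ T, r ∈ Set.Icc tmin tmax := by
        intro r hr
        rcases Finset.mem_union.mp hr with hr0 | hrP
        · exact hT₀Icc r hr0
        · exact Set.Ioo_subset_Icc_self (hPIoo r hrP)
      have hmass : ∑ r ∈ T, Wm r = 1 := by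
        have hTWm := hWmsplit (fun _ => 1)
        simp only [mul_one] at hTWm
        rw [hTWm, hW₀mass, Finset.sum_const, hPcard, nsmul_eq_mul]
        have hc : ((M + 1 : ℕ) : ℝ) = (M : ℝ) + 1 := by push_cast; ring
        rw [hc]
        field_simp
        ring
      have hbig : M + 1 ≤ (T.erase tmin).card := by
        have hsub : P ⊆ T.erase tmin := fun r hr =>
          Finset.mem_erase.mpr ⟨haP r hr, Finset.mem_union_right _ hr⟩
        calc M + 1 = P.card := hPcard.symm
          _ ≤ (T.erase tmin).card := Finset.card_le_card hsub
      obtain ⟨c, t, h1, h2, h3, h4, h5, h6⟩ :=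
        main_rep N hN tmin tmax h M hM hMpos T Wm hpos hIccT hmass hbig
      refine ⟨(c, t), ⟨h1, h2, h3, h4, h5⟩, ?_⟩
      funext i
      show ∑ j, c j * t j ^ ((i : ℕ) + 1) = (1 - ε) * x i + ε * y i
      rw [h6 i]
      have := hWmsplit (fun s => s ^ ((i : ℕ) + 1))
      rw [this, ← hW₀mom i, hy]
      ring
    have hε' : Tendsto (fun n : ℕ => (1:ℝ)/(n+2)) atTop (nhds 0) := by
      apply Filter.Tendsto.div_atTop tendsto_const_nhds
      exact Filter.tendsto_atTop_add_const_right _ _ tendsto_natCast_atTop_atTop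
    have htend : Tendsto
        (fun n : ℕ => fun i : Fin N => (1 - (1:ℝ)/(n+2)) * x i + ((1:ℝ)/(n+2)) * y i)
        atTop (nhds x) := by
      rw [tendsto_pi_nhds]
      intro i
      have hconst : Tendsto (fun _ : ℕ => (1:ℝ)) atTop (nhds 1) := tendsto_const_nhds
      have := ((hconst.sub hε').mul_const (x i)).add (hε'.mul_const (y i))
      simpa using this
    exact (image_isClosed N M hMpos tmin tmax).mem_of_tendsto htend
      (Filter.Eventually.of_forall hseq)
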